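/- Let n_t be a nonincreasing (in t) ℕ-valued stochastic process and let E[n_t] be its (nonincreasing, right-continuous) expectation, with E[n_{t₀}] > 0. For any ε ∈ (0,1) there exists a finite set of points t₀ > t₁ > … > t_k = 0 in [0, t₀] such that the event {∀ i : n_{tᵢ} ≤ (1/(1-ε))·E[n_{tᵢ}]} is contained in the event {∀ t ∈ [0,t₀] : n_t ≤ (1/(1-ε))²·E[n_t]}. -/
import Mathlib

open MeasureTheory

noncomputable def uSeq (e : ℝ → ℝ) (t₀ c : ℝ) : ℕ → ℝ
  | 0 => 0
  | j + 1 => sSup {t | uSeq e t₀ c j ≤ t ∧ t ≤ t₀ ∧ e (uSeq e t₀ c j) ≤ c * e t}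

theorem finite_time_points
    {Ω : Type*} [MeasurableSpace Ω] (P : Measure Ω) [IsProbabilityMeasure P]
    (nt : ℝ → Ω → ℕ)
    (hpath : ∀ ω, Antitone fun t => nt t ω)
    (e : ℝ → ℝ)
    (he : ∀ t, e t = ∫ ω, (nt t ω : ℝ) ∂P)
    (hemono : Antitone e)
    (herc : ∀ t : ℝ, ContinuousWithinAt e (Set.Ici t) t)
    (t₀ : ℝ) (ht₀ : 0 ≤ t₀) (hpos : 0 < e t₀)
    (ε : ℝ) (hε : ε ∈ Set.Ioo (0 : ℝ) 1) :
    ∃ (k : ℕ) (ts : Fin (k + 1) → ℝ),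
      (StrictAnti ts) ∧ ts 0 = t₀ ∧ ts (Fin.last k) = 0 ∧
      {ω | ∀ i, (nt (ts i) ω : ℝ) ≤ (1 / (1 - ε)) * e (ts i)} ⊆
        {ω | ∀ t ∈ Set.Icc (0 : ℝ) t₀, (nt t ω : ℝ) ≤ (1 / (1 - ε)) ^ 2 * e t} := by
  classical
  obtain ⟨hε0, hε1⟩ := hε
  set c : ℝ := 1 / (1 - ε) with hc
  have h1ε : 0 < 1 - ε := by linarith
  have hc1 : 1 < c := by
    rw [hc, lt_div_iff₀ h1ε]; linarith
  have hc0 : 0 < c := lt_trans one_pos hc1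
  set u : ℕ → ℝ := uSeq e t₀ c with hu
  have hu0 : u 0 = 0 := rfl
  have huS : ∀ j, u (j + 1) = sSup {t | u j ≤ t ∧ t ≤ t₀ ∧ e (u j) ≤ c * e t} :=
    fun j => rfl
  -- positivity of e on [0, t₀]
  have hepos : ∀ t, t ≤ t₀ → 0 < e t := fun t ht => lt_of_lt_of_le hpos (hemono ht)
  -- the set T j
  set T : ℕ → Set ℝ := fun j => {t | u j ≤ t ∧ t ≤ t₀ ∧ e (u j) ≤ c * e t} with hT
  have hbdd : ∀ j, BddAbove (T j) := fun j => ⟨t₀, fun x hx => hx.2.1⟩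
  have hmemT : ∀ j, 0 ≤ u j → u j ≤ t₀ → u j ∈ T j := by
    intro j h0 h1
    refine ⟨le_refl _, h1, ?_⟩
    have := hepos (u j) h1
    nlinarith
  -- bounds on u
  have hbounds : ∀ j, 0 ≤ u j ∧ u j ≤ t₀ := by
    intro j
    induction j with
    | zero => exact ⟨le_refl _, ht₀⟩
    | succ j ih =>
      have hne : (T j).Nonempty := ⟨u j, hmemT j ih.1 ih.2⟩
      constructor
      · rw [huS j]
        exact le_trans ih.1 (le_csSup (hbdd j) (hmemT j ih.1 ih.2))
      · rw [huS j]
        exact csSup_le hne (fun x hx => hx.2.1)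
  have hneT : ∀ j, (T j).Nonempty := fun j => ⟨u j, hmemT j (hbounds j).1 (hbounds j).2⟩
  have humono : ∀ j, u j ≤ u (j + 1) := by
    intro j
    rw [huS j]
    exact le_csSup (hbdd j) (hmemT j (hbounds j).1 (hbounds j).2)
  -- progress: if u j < t₀ then u j < u (j+1)
  have hprog : ∀ j, u j < t₀ → u j < u (j + 1) := by
    intro j hjt
    have hec : e (u j) < c * e (u j) := by
      have := hepos (u j) (hbounds j).2
      nlinarith
    have htend : Filter.Tendsto (fun t => c * e t) (nhdsWithin (u j) (Set.Ici (u j)))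
        (nhds (c * e (u j))) :=
      (Filter.Tendsto.const_mul c (herc (u j)))
    have h1 : ∀ᶠ t in nhdsWithin (u j) (Set.Ici (u j)), e (u j) < c * e t :=
      htend.eventually_const_lt hec
    have h2 : ∀ᶠ t in nhdsWithin (u j) (Set.Ici (u j)), t < t₀ :=
      Filter.Eventually.filter_mono nhdsWithin_le_nhds (eventually_lt_nhds hjt)
    have h3 : ∀ᶠ t in nhdsWithin (u j) (Set.Ioi (u j)),
        e (u j) < c * e t ∧ t < t₀ :=
      ((h1.and h2).filter_mono (nhdsWithin_mono _ Set.Ioi_subset_Ici_self))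
    have h4 : ∀ᶠ t in nhdsWithin (u j) (Set.Ioi (u j)), u j < t :=
      eventually_mem_nhdsWithin
    obtain ⟨t, ⟨hte, htt⟩, htj⟩ := (h3.and h4).exists
    have : t ∈ T j := ⟨le_of_lt htj, le_of_lt htt, le_of_lt hte⟩
    calc u j < t := htj
    _ ≤ u (j + 1) := by rw [huS j]; exact le_csSup (hbdd j) this
  -- decay
  have hdecay : ∀ j, u (j + 1) < u (j + 2) → c * e (u (j + 2)) < e (u j) := by
    intro j hlt
    by_contra hcon
    push_neg at hcon
    have : u (j + 2) ∈ T j :=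
      ⟨le_trans (humono j) (le_of_lt hlt), (hbounds (j + 2)).2, hcon⟩
    have : u (j + 2) ≤ u (j + 1) := by rw [huS j]; exact le_csSup (hbdd j) this
    linarith
  -- termination
  have hterm : ∃ j, u j = t₀ := by
    by_contra hcon
    push_neg at hcon
    have hlt : ∀ j, u j < t₀ := fun j => lt_of_le_of_ne (hbounds j).2 (hcon j)
    have hstep : ∀ j, u j < u (j + 1) := fun j => hprog j (hlt j)
    have hdec : ∀ j, c * e (u (j + 2)) < e (u j) := fun j => hdecay j (hstep (j + 1))
    have hgeo : ∀ m, e (u (2 * m)) * c ^ m ≤ e 0 := by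
      intro m
      induction m with
      | zero => simp [hu0]
      | succ m ih =>
        have h2 : 2 * (m + 1) = 2 * m + 2 := by ring
        rw [h2]
        have hd := hdec (2 * m)
        have hcm : (0:ℝ) < c ^ m := pow_pos hc0 m
        calc e (u (2 * m + 2)) * c ^ (m + 1) = (c * e (u (2 * m + 2))) * c ^ m := by ring
        _ ≤ e (u (2 * m)) * c ^ m := by nlinarith
        _ ≤ e 0 := ih
    obtain ⟨m, hm⟩ := pow_unbounded_of_one_lt (e 0 / e t₀) hc1
    have h1 : e t₀ * c ^ m ≤ e (u (2 * m)) * c ^ m :=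
      mul_le_mul_of_nonneg_right (hemono (hbounds (2 * m)).2) (le_of_lt (pow_pos hc0 m))
    have h2 : e 0 < e t₀ * c ^ m := by
      rw [div_lt_iff₀ hpos] at hm; linarith
    have := hgeo m
    linarith
  set k : ℕ := Nat.find hterm with hk
  have hkt : u k = t₀ := Nat.find_spec hterm
  have hkmin : ∀ j, j < k → u j ≠ t₀ := fun j hj => Nat.find_min hterm hj
  -- strict monotonicity up to k
  have hsm : ∀ a b, a < b → b ≤ k → u a < u b := by
    intro a b
    induction b with
    | zero => omega
    | succ b ih =>
      intro hab hbk
      have hb : u b < u (b + 1) :=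
        hprog b (lt_of_le_of_ne (hbounds b).2 (hkmin b (by omega)))
      rcases Nat.lt_succ_iff_lt_or_eq.mp hab with h | h
      · exact lt_trans (ih h (by omega)) hb
      · rw [h]; exact hb
  -- covering property
  have hcover : ∀ t, 0 ≤ t → t ≤ t₀ → ∃ j, j ≤ k ∧ u j ≤ t ∧ e (u j) ≤ c * e t := by
    intro t ht0 htt
    set J : ℕ := Nat.findGreatest (fun j => u j ≤ t) k with hJ
    have hP0 : u 0 ≤ t := by rw [hu0]; exact ht0
    have hJt : u J ≤ t := by
      have := Nat.findGreatest_spec (P := fun j => u j ≤ t) (Nat.zero_le k) hP0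
      simpa [hJ] using this
    have hJk : J ≤ k := Nat.findGreatest_le k
    rcases eq_or_lt_of_le hJk with heq | hlt
    · -- J = k : then t = t₀
      have : t = t₀ := le_antisymm htt (by rw [← hkt, ← heq]; exact hJt)
      refine ⟨k, le_refl _, by rw [hkt, this], ?_⟩
      rw [hkt, this]
      have := hepos t₀ (le_refl _)
      nlinarith
    · have hng : ¬ (u (J + 1) ≤ t) :=
        Nat.findGreatest_is_greatest (P := fun j => u j ≤ t) (n := k) (k := J + 1)
          (by rw [← hJ]; omega) (by omega)
      push_neg at hng
      have : t < sSup (T J) := by rw [← huS J]; exact hng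
      obtain ⟨t', ht'T, htt'⟩ := exists_lt_of_lt_csSup (hneT J) this
      refine ⟨J, hJk, hJt, ?_⟩
      calc e (u J) ≤ c * e t' := ht'T.2.2
      _ ≤ c * e t := mul_le_mul_of_nonneg_left (hemono (le_of_lt htt')) (le_of_lt hc0)
  -- assemble
  refine ⟨k, fun i => u (k - (i : ℕ)), ?_, ?_, ?_, ?_⟩
  · intro i j hij
    have hi := i.isLt
    have hj := j.isLt
    exact hsm (k - (j : ℕ)) (k - (i : ℕ)) (by omega) (by omega)
  · simp [hkt]
  · simp [hu0]
  · intro ω hω t ht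
    obtain ⟨j, hjk, hjt, hje⟩ := hcover t ht.1 ht.2
    have hi := hω ⟨k - j, by omega⟩
    simp only at hi
    rw [show k - (k - j) = j by omega] at hi
    have hmon : (nt t ω : ℝ) ≤ (nt (u j) ω : ℝ) := Nat.cast_le.mpr (hpath ω hjt)
    calc (nt t ω : ℝ) ≤ (nt (u j) ω : ℝ) := hmon
    _ ≤ c * e (u j) := hi
    _ ≤ c * (c * e t) := mul_le_mul_of_nonneg_left hje (le_of_lt hc0)
    _ = c ^ 2 * e t := by ring
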